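/- On ℝ⁶ with coordinates (a, b, p, q, x, y), each of the vector fields V₁, V₂, V₃ annihilates the determinant function f(a,b,p,q,x,y) = aq − bp: for every point m ∈ ℝ⁶ and each i = 1,2,3, the directional derivative Df(m)(Vᵢ(m)) = 0; consequently every pointwise linear combination of V₁, V₂, V₃ annihilates f. -/

import Mathlib

/-- Coordinates on ℝ⁶ are ordered `(a, b, p, q, x, y)`, i.e. indices `0,…,5`. -/
def V1 : (Fin 6 → ℝ) → (Fin 6 → ℝ) := fun m =>
  ![-(m 0 - m 1), -(m 0 - m 1), -(m 2 - m 3), -(m 2 - m 3), m 0 - m 1, m 2 - m 3]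

def V2 : (Fin 6 → ℝ) → (Fin 6 → ℝ) := fun m => ![m 1, 0, m 3, 0, 0, 0]

def V3 : (Fin 6 → ℝ) → (Fin 6 → ℝ) := fun m => ![0, -(m 0), 0, -(m 2), 0, 0]

/-- The determinant function `f = aq − bp`. -/
def detf : (Fin 6 → ℝ) → ℝ := fun m => m 0 * m 3 - m 1 * m 2

lemma detf_hasFDerivAt (m : Fin 6 → ℝ) :
    HasFDerivAt detf
      ((m 3 • ContinuousLinearMap.proj 0 + m 0 • ContinuousLinearMap.proj 3)
        - (m 2 • ContinuousLinearMap.proj 1 + m 1 • ContinuousLinearMap.proj 2)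
        : (Fin 6 → ℝ) →L[ℝ] ℝ) m := by
  have h : ∀ i : Fin 6, HasFDerivAt (fun m : Fin 6 → ℝ => m i)
      (ContinuousLinearMap.proj i : (Fin 6 → ℝ) →L[ℝ] ℝ) m :=
    fun i => hasFDerivAt_apply i m
  have := ((h 0).mul (h 3)).sub ((h 1).mul (h 2))
  refine this.congr_fderiv ?_
  ext v
  simp [ContinuousLinearMap.proj]
  ring

lemma detf_fderiv (m v : Fin 6 → ℝ) :
    fderiv ℝ detf m v = m 3 * v 0 + m 0 * v 3 - (m 2 * v 1 + m 1 * v 2) := by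
  rw [(detf_hasFDerivAt m).fderiv]
  simp [ContinuousLinearMap.proj, mul_comm]

theorem primitive_moves_annihilate_det :
    (∀ m : Fin 6 → ℝ,
      fderiv ℝ detf m (V1 m) = 0 ∧ fderiv ℝ detf m (V2 m) = 0 ∧
      fderiv ℝ detf m (V3 m) = 0) ∧
    (∀ (g₁ g₂ g₃ : (Fin 6 → ℝ) → ℝ) (m : Fin 6 → ℝ),
      fderiv ℝ detf m (g₁ m • V1 m + g₂ m • V2 m + g₃ m • V3 m) = 0) := by
  constructor
  · intro m
    refine ⟨?_, ?_, ?_⟩ <;> rw [detf_fderiv] <;> simp [V1, V2, V3] <;> ring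
  · intro g₁ g₂ g₃ m
    rw [detf_fderiv]
    simp [V1, V2, V3]
    ring
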